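/- arXiv:2511.07114 — 5 statements merged into one kernel-verified Lean document; each statement's English description precedes it below -/
import Mathlib

section
/- Let n, a, b be integers with n ≥ 10. Then equations (1)–(5) all hold if and only if (n, a, b) = (10, 2, 6) or (n, a, b) = (11, 1, 3). -/
/-- For integers `n ≥ 10`, the five Diophantine equations expressing
numerical exceptionality of the collection
`O, O(aK−E₁), …, O(aK−Eₙ), O(bK−H), O(2(bK−H))` on the blow-up of `ℙ²` in `n` points
hold if and only if `(n, a, b) = (10, 2, 6)` or `(n, a, b) = (11, 1, 3)`. -/
theorem stmt0 (n a b : ℤ) (hn : 10 ≤ n) :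
    (a * (a + 1) * (9 - n) + 2 * a = -2 ∧
     b * (b + 1) * (9 - n) + 6 * b = -6 ∧
     b * (2 * b + 1) * (9 - n) + 12 * b = -6 ∧
     (a - b) * (a - b - 1) * (9 - n) - 4 * (a - b) = -4 ∧
     (a - 2 * b) * (a - 2 * b - 1) * (9 - n) - 10 * (a - 2 * b) = -10) ↔
    ((n = 10 ∧ a = 2 ∧ b = 6) ∨ (n = 11 ∧ a = 1 ∧ b = 3)) := by
  constructor
  · rintro ⟨h1, h2, h3, h4, h5⟩
    -- factor eq (3):
    have h3' : (2 * b + 1) * (b * (n - 9) - 6) = 0 := by linear_combination -h3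
    have hb : b * (n - 9) = 6 := by
      rcases mul_eq_zero.mp h3' with h | h
      · omega
      · linarith
    -- factor eq (1):
    have h1' : (a + 1) * (a * (n - 9) - 2) = 0 := by linear_combination -h1
    rcases mul_eq_zero.mp h1' with ha | ha
    · -- a = -1 : contradiction via eq (4)
      exfalso
      have ha' : a = -1 := by linarith
      subst ha'
      have h4' : (-1 - b - 1) * ((-1 - b) * (n - 9) + 4) = 0 := by linear_combination -h4
      have hbpos : 0 < b := by nlinarith
      rcases mul_eq_zero.mp h4' with h | h
      · omega
      · have : (n : ℤ) = 7 := by linear_combination -h - hb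
        omega
    · have ha' : a * (n - 9) = 2 := by linarith
      have hdvd : (n - 9) ∣ 2 := ⟨a, by linarith [ha']⟩
      have hle : n - 9 ≤ 2 := Int.le_of_dvd (by norm_num) hdvd
      have : n = 10 ∨ n = 11 := by omega
      rcases this with rfl | rfl
      · left
        refine ⟨rfl, ?_, ?_⟩ <;> [linarith [ha']; linarith [hb]]
      · right
        refine ⟨rfl, ?_, ?_⟩ <;> [linarith [ha']; linarith [hb]]
  · rintro (⟨rfl, rfl, rfl⟩ | ⟨rfl, rfl, rfl⟩) <;> norm_num
end

section
/- Let n, b be integers with n ≥ 10 satisfying equations (2) and (3). Then (n, b) ∈ {(10, 6), (11, 3), (12, 2), (15, 1)}. -/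
/-- If integers `n, b` with `n ≥ 10` satisfy equations (2) and (3),
then `(n, b) ∈ {(10, 6), (11, 3), (12, 2), (15, 1)}`. -/
theorem stmt3 (n b : ℤ) (hn : 10 ≤ n)
    (h2 : b * (b + 1) * (9 - n) + 6 * b = -6)
    (h3 : b * (2 * b + 1) * (9 - n) + 12 * b = -6) :
    (n = 10 ∧ b = 6) ∨ (n = 11 ∧ b = 3) ∨ (n = 12 ∧ b = 2) ∨ (n = 15 ∧ b = 1) := by
  have hb0 : b ≠ 0 := by rintro rfl; simp at h2
  have hdiff : b * (b * (9 - n) + 6) = 0 := by ring_nf; linear_combination h3 - h2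
  have key : b * (n - 9) = 6 := by
    rcases mul_eq_zero.mp hdiff with h | h
    · exact absurd h hb0
    · linarith
  have hb1 : 1 ≤ b := by nlinarith
  have hb6 : b ≤ 6 := by nlinarith
  interval_cases b <;> omega
end

section
/- There are no integers a, b such that equations (1)–(5) hold with n = 12. -/
/-- There are no integers `a, b` satisfying equations (1)–(5)
with `n = 12`. -/
theorem stmt4 :
    ¬ ∃ a b : ℤ,
      a * (a + 1) * (9 - 12) + 2 * a = -2 ∧
      b * (b + 1) * (9 - 12) + 6 * b = -6 ∧
      b * (2 * b + 1) * (9 - 12) + 12 * b = -6 ∧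
      (a - b) * (a - b - 1) * (9 - 12) - 4 * (a - b) = -4 ∧
      (a - 2 * b) * (a - 2 * b - 1) * (9 - 12) - 10 * (a - 2 * b) = -10 := by
  rintro ⟨a, b, h1, h2, h3, h4, h5⟩
  have ha : (a + 1) * (3 * a - 2) = 0 := by ring_nf; ring_nf at h1; linarith
  have hb : (b - 2) * (2 * b + 1) = 0 := by ring_nf; ring_nf at h3; linarith
  rcases mul_eq_zero.1 ha with ha' | ha' <;>
  rcases mul_eq_zero.1 hb with hb' | hb' <;> omega
end

section
/- Let a, b be integers. Equations (1)–(5) hold with n = 11 if and only if a = 1 and b = 3. -/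
/-- Integers `a, b` satisfy equations (1)–(5) with `n = 11`
if and only if `a = 1` and `b = 3`. -/
theorem stmt7 (a b : ℤ) :
    (a * (a + 1) * (9 - 11) + 2 * a = -2 ∧
     b * (b + 1) * (9 - 11) + 6 * b = -6 ∧
     b * (2 * b + 1) * (9 - 11) + 12 * b = -6 ∧
     (a - b) * (a - b - 1) * (9 - 11) - 4 * (a - b) = -4 ∧
     (a - 2 * b) * (a - 2 * b - 1) * (9 - 11) - 10 * (a - 2 * b) = -10) ↔
    (a = 1 ∧ b = 3) := by
  constructor
  · rintro ⟨h1, h2, h3, h4, h5⟩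
    have hb2 : 2 * b = 6 := by linear_combination h3 - 2 * h2
    have hb : b = 3 := by omega
    subst hb
    have ha : 10 * a = 10 := by linear_combination h4 - h1
    omega
  · rintro ⟨rfl, rfl⟩
    norm_num
end

section
/- Let n ≥ 1 be an integer and a, b integers. In the Picard lattice of the blow-up of ℙ² in n points, set Dᵢ = aK − Eᵢ (1 ≤ i ≤ n), F = bK − H, and let (G₀, G₁, …, G_{n+2}) = (0, D₁, …, Dₙ, F, 2F). Then (Gᵢ − Gⱼ)·(Gᵢ − Gⱼ − K) = −2 holds for all 0 ≤ i < j ≤ n+2 (i.e., the sequence is numerically exceptional) if and only if the five equations hold: a(a+1)(9−n)+2a = −2, b(b+1)(9−n)+6b = −6, b(2b+1)(9−n)+12b = −6, (a−b)(a−b−1)(9−n)−4(a−b) = −4, and (a−2b)(a−2b−1)(9−n)−10(a−2b) = −10. -/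
/-- The Picard lattice of the blow-up of `ℙ²` in `n` points, recorded as the coefficient
of the hyperplane class `H` together with the coefficients of the exceptional classes
`E₁, …, Eₙ`. -/
abbrev Pic (n : ℕ) := ℤ × (Fin n → ℤ)

/-- The intersection pairing: `H·H = 1`, `Eᵢ·Eᵢ = -1`, `H·Eᵢ = 0`, `Eᵢ·Eⱼ = 0` for `i ≠ j`. -/
def inter {n : ℕ} (D D' : Pic n) : ℤ :=
  D.1 * D'.1 - ∑ i : Fin n, D.2 i * D'.2 i

/-- The hyperplane class `H`. -/
def Hd (n : ℕ) : Pic n := (1, 0)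

/-- The exceptional class `Eᵢ` (meaningful for `1 ≤ i ≤ n`). -/
def Ed (n : ℕ) (i : ℕ) : Pic n := (0, fun j => if (j : ℕ) + 1 = i then 1 else 0)

/-- The canonical class `K = -3H + E₁ + ⋯ + Eₙ`. -/
def Kd (n : ℕ) : Pic n := (-3 : ℤ) • Hd n + ∑ i ∈ Finset.range n, Ed n (i + 1)


-- bilinearity
lemma inter_sub_left {n : ℕ} (D D' E : Pic n) :
    inter (D - D') E = inter D E - inter D' E := by
  simp [inter, sub_mul, Finset.sum_sub_distrib]; ring

lemma inter_sub_right {n : ℕ} (D E E' : Pic n) :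
    inter D (E - E') = inter D E - inter D E' := by
  simp [inter, mul_sub, Finset.sum_sub_distrib]; ring

lemma inter_smul_left {n : ℕ} (c : ℤ) (D E : Pic n) :
    inter (c • D) E = c * inter D E := by
  simp [inter, Finset.mul_sum, mul_sub, mul_assoc]

lemma inter_smul_right {n : ℕ} (c : ℤ) (D E : Pic n) :
    inter D (c • E) = c * inter D E := by
  simp [inter, Finset.mul_sum, mul_sub]
  ring_nf

lemma inter_zero_left {n : ℕ} (E : Pic n) : inter 0 E = 0 := by simp [inter]
lemma inter_zero_right {n : ℕ} (E : Pic n) : inter E 0 = 0 := by simp [inter]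

lemma Kd_fst {n : ℕ} : (Kd n).1 = -3 := by
  simp [Kd, Hd, Ed, Prod.fst_sum]

lemma Kd_snd {n : ℕ} (j : Fin n) : (Kd n).2 j = 1 := by
  simp [Kd, Hd, Ed, Prod.snd_sum, Finset.sum_apply]

example : True := trivial

lemma inter_add_left {n : ℕ} (D D' E : Pic n) :
    inter (D + D') E = inter D E + inter D' E := by
  simp [inter, add_mul, Finset.sum_add_distrib]; ring

lemma inter_add_right {n : ℕ} (D E E' : Pic n) :
    inter D (E + E') = inter D E + inter D E' := by
  simp [inter, mul_add, Finset.sum_add_distrib]; ring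

lemma sum_ind {n i : ℕ} (h1 : 1 ≤ i) (h2 : i ≤ n) (f : Fin n → ℤ) :
    ∑ j : Fin n, (if (j : ℕ) + 1 = i then f j else 0) = f ⟨i - 1, by omega⟩ := by
  rw [Finset.sum_eq_single (⟨i - 1, by omega⟩ : Fin n)]
  · rw [if_pos (by simp; omega)]
  · intro b _ hb
    have : ¬((b : ℕ) + 1 = i) := by
      intro h; apply hb; apply Fin.ext; simp; omega
    simp [this]
  · simp

lemma inter_K_K {n : ℕ} : inter (Kd n) (Kd n) = 9 - (n : ℤ) := by
  simp [inter, Kd_fst, Kd_snd]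

lemma inter_K_H {n : ℕ} : inter (Kd n) (Hd n) = -3 := by
  simp [inter, Kd_fst, Kd_snd, Hd]

lemma inter_H_K {n : ℕ} : inter (Hd n) (Kd n) = -3 := by
  simp [inter, Kd_fst, Kd_snd, Hd]

lemma inter_H_H {n : ℕ} : inter (Hd n) (Hd n) = 1 := by
  simp [inter, Hd]

lemma inter_K_E {n i : ℕ} (h1 : 1 ≤ i) (h2 : i ≤ n) : inter (Kd n) (Ed n i) = -1 := by
  simp only [inter, Kd_fst, Kd_snd, Ed, one_mul]
  rw [sum_ind h1 h2 (fun _ => (1 : ℤ))]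
  ring

lemma inter_E_K {n i : ℕ} (h1 : 1 ≤ i) (h2 : i ≤ n) : inter (Ed n i) (Kd n) = -1 := by
  simp only [inter, Kd_fst, Kd_snd, Ed, mul_one]
  rw [sum_ind h1 h2 (fun _ => (1 : ℤ))]
  ring

lemma inter_H_E {n i : ℕ} : inter (Hd n) (Ed n i) = 0 := by
  simp [inter, Hd, Ed]

lemma inter_E_H {n i : ℕ} : inter (Ed n i) (Hd n) = 0 := by
  simp [inter, Hd, Ed]

lemma inter_E_E_self {n i : ℕ} (h1 : 1 ≤ i) (h2 : i ≤ n) :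
    inter (Ed n i) (Ed n i) = -1 := by
  simp only [inter, Ed, zero_mul, ite_mul, one_mul, zero_mul, mul_ite, mul_one, mul_zero]
  rw [show (∑ j : Fin n, if (j : ℕ) + 1 = i then (if (j : ℕ) + 1 = i then (1:ℤ) else 0) else 0)
      = ∑ j : Fin n, if (j : ℕ) + 1 = i then (1:ℤ) else 0 from
    Finset.sum_congr rfl (by intro j _; split <;> simp_all)]
  rw [sum_ind h1 h2 (fun _ => (1 : ℤ))]
  ring

lemma inter_E_E_ne {n i j : ℕ} (hij : i ≠ j) : inter (Ed n i) (Ed n j) = 0 := by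
  simp only [inter, Ed, zero_mul, zero_sub, neg_eq_zero]
  apply Finset.sum_eq_zero
  intro k _
  split <;> split <;> simp_all

/-- The sequence `(G₀, G₁, …, G_{n+2}) = (0, D₁, …, Dₙ, F, 2F)` with
`Dᵢ = aK − Eᵢ` and `F = bK − H`. -/
def G (n : ℕ) (a b : ℤ) (i : ℕ) : Pic n :=
  if i = 0 then 0
  else if i ≤ n then a • Kd n - Ed n i
  else if i = n + 1 then b • Kd n - Hd n
  else 2 • (b • Kd n - Hd n)

lemma case1 {n i : ℕ} (a : ℤ) (h1 : 1 ≤ i) (h2 : i ≤ n) :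
    inter (0 - (a • Kd n - Ed n i)) (0 - (a • Kd n - Ed n i) - Kd n)
      = a * (a + 1) * (9 - (n : ℤ)) + 2 * a := by
  simp only [inter_sub_left, inter_sub_right, inter_smul_left, inter_smul_right,
    inter_zero_left, inter_zero_right, inter_K_K, inter_K_H, inter_H_K, inter_H_H,
    inter_K_E h1 h2, inter_E_K h1 h2, inter_H_E, inter_E_H, inter_E_E_self h1 h2]
  ring

lemma case2 {n : ℕ} (b : ℤ) :
    inter (0 - (b • Kd n - Hd n)) (0 - (b • Kd n - Hd n) - Kd n)
      = b * (b + 1) * (9 - (n : ℤ)) + 6 * b + 4 := by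
  simp only [inter_sub_left, inter_sub_right, inter_smul_left, inter_smul_right,
    inter_zero_left, inter_zero_right, inter_K_K, inter_K_H, inter_H_K, inter_H_H]
  ring

lemma case3 {n : ℕ} (b : ℤ) :
    inter (0 - 2 • (b • Kd n - Hd n)) (0 - 2 • (b • Kd n - Hd n) - Kd n)
      = 2 * (b * (2 * b + 1) * (9 - (n : ℤ)) + 12 * b) + 10 := by
  rw [two_smul]
  simp only [inter_sub_left, inter_sub_right, inter_add_left, inter_add_right,
    inter_smul_left, inter_smul_right,
    inter_zero_left, inter_zero_right, inter_K_K, inter_K_H, inter_H_K, inter_H_H]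
  ring

lemma case4 {n i : ℕ} (a b : ℤ) (h1 : 1 ≤ i) (h2 : i ≤ n) :
    inter ((a • Kd n - Ed n i) - (b • Kd n - Hd n))
      ((a • Kd n - Ed n i) - (b • Kd n - Hd n) - Kd n)
      = (a - b) * (a - b - 1) * (9 - (n : ℤ)) - 4 * (a - b) + 2 := by
  simp only [inter_sub_left, inter_sub_right, inter_smul_left, inter_smul_right,
    inter_zero_left, inter_zero_right, inter_K_K, inter_K_H, inter_H_K, inter_H_H,
    inter_K_E h1 h2, inter_E_K h1 h2, inter_H_E, inter_E_H, inter_E_E_self h1 h2]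
  ring

lemma case5 {n i : ℕ} (a b : ℤ) (h1 : 1 ≤ i) (h2 : i ≤ n) :
    inter ((a • Kd n - Ed n i) - 2 • (b • Kd n - Hd n))
      ((a • Kd n - Ed n i) - 2 • (b • Kd n - Hd n) - Kd n)
      = (a - 2 * b) * (a - 2 * b - 1) * (9 - (n : ℤ)) - 10 * (a - 2 * b) + 8 := by
  rw [two_smul]
  simp only [inter_sub_left, inter_sub_right, inter_add_left, inter_add_right,
    inter_smul_left, inter_smul_right,
    inter_zero_left, inter_zero_right, inter_K_K, inter_K_H, inter_H_K, inter_H_H,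
    inter_K_E h1 h2, inter_E_K h1 h2, inter_H_E, inter_E_H, inter_E_E_self h1 h2]
  ring

lemma caseEE {n i j : ℕ} (a : ℤ) (hi1 : 1 ≤ i) (hi2 : i ≤ n) (hj1 : 1 ≤ j) (hj2 : j ≤ n)
    (hij : i ≠ j) :
    inter ((a • Kd n - Ed n i) - (a • Kd n - Ed n j))
      ((a • Kd n - Ed n i) - (a • Kd n - Ed n j) - Kd n) = -2 := by
  simp only [inter_sub_left, inter_sub_right, inter_smul_left, inter_smul_right,
    inter_zero_left, inter_zero_right, inter_K_K, inter_K_H, inter_H_K, inter_H_H,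
    inter_K_E hi1 hi2, inter_E_K hi1 hi2, inter_K_E hj1 hj2, inter_E_K hj1 hj2,
    inter_H_E, inter_E_H, inter_E_E_self hi1 hi2, inter_E_E_self hj1 hj2,
    inter_E_E_ne hij, inter_E_E_ne (Ne.symm hij)]
  ring

lemma diffFF {n : ℕ} (b : ℤ) :
    (b • Kd n - Hd n) - 2 • (b • Kd n - Hd n) = 0 - (b • Kd n - Hd n) := by
  rw [two_smul]; abel

/-- For `n ≥ 1` and integers `a, b`, the sequence
`(0, aK−E₁, …, aK−Eₙ, bK−H, 2(bK−H))` satisfies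
`(Gᵢ − Gⱼ)·(Gᵢ − Gⱼ − K) = −2` for all `0 ≤ i < j ≤ n+2` (numerical exceptionality)
if and only if the five Diophantine equations hold. -/
theorem stmt8 (n : ℕ) (hn : 1 ≤ n) (a b : ℤ) :
    (∀ i j : ℕ, i < j → j ≤ n + 2 →
        inter (G n a b i - G n a b j) (G n a b i - G n a b j - Kd n) = -2) ↔
    (a * (a + 1) * (9 - (n : ℤ)) + 2 * a = -2 ∧
     b * (b + 1) * (9 - (n : ℤ)) + 6 * b = -6 ∧
     b * (2 * b + 1) * (9 - (n : ℤ)) + 12 * b = -6 ∧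
     (a - b) * (a - b - 1) * (9 - (n : ℤ)) - 4 * (a - b) = -4 ∧
     (a - 2 * b) * (a - 2 * b - 1) * (9 - (n : ℤ)) - 10 * (a - 2 * b) = -10) := by
  have g0 : G n a b 0 = 0 := by simp [G]
  have gE : ∀ i : ℕ, 1 ≤ i → i ≤ n → G n a b i = a • Kd n - Ed n i := by
    intro i h1 h2; unfold G; rw [if_neg (by omega), if_pos h2]
  have gF : G n a b (n + 1) = b • Kd n - Hd n := by
    unfold G; rw [if_neg (by omega), if_neg (by omega), if_pos rfl]
  have gF2 : G n a b (n + 2) = 2 • (b • Kd n - Hd n) := by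
    unfold G; rw [if_neg (by omega), if_neg (by omega), if_neg (by omega)]
  constructor
  · intro h
    have h1 := h 0 1 (by omega) (by omega)
    have h2 := h 0 (n + 1) (by omega) (by omega)
    have h3 := h 0 (n + 2) (by omega) (by omega)
    have h4 := h 1 (n + 1) (by omega) (by omega)
    have h5 := h 1 (n + 2) (by omega) (by omega)
    rw [g0, gE 1 le_rfl hn, case1 a le_rfl hn] at h1
    rw [g0, gF, case2 b] at h2
    rw [g0, gF2, case3 b] at h3
    rw [gE 1 le_rfl hn, gF, case4 a b le_rfl hn] at h4
    rw [gE 1 le_rfl hn, gF2, case5 a b le_rfl hn] at h5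
    exact ⟨by linarith, by linarith, by linarith, by linarith, by linarith⟩
  · rintro ⟨e1, e2, e3, e4, e5⟩ i j hij hj
    by_cases hi0 : i = 0
    · subst hi0
      by_cases hjn : j ≤ n
      · rw [g0, gE j hij hjn, case1 a hij hjn]; linarith
      · by_cases hj1 : j = n + 1
        · subst hj1; rw [g0, gF, case2 b]; linarith
        · have : j = n + 2 := by omega
          subst this; rw [g0, gF2, case3 b]; linarith
    · have hi1 : 1 ≤ i := by omega
      by_cases hin : i ≤ n
      · rw [gE i hi1 hin]
        by_cases hjn : j ≤ n
        · rw [gE j (by omega) hjn]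
          exact caseEE a hi1 hin (by omega) hjn (by omega)
        · by_cases hj1 : j = n + 1
          · subst hj1; rw [gF, case4 a b hi1 hin]; linarith
          · have : j = n + 2 := by omega
            subst this; rw [gF2, case5 a b hi1 hin]; linarith
      · have hi : i = n + 1 := by omega
        have hjv : j = n + 2 := by omega
        subst hi; subst hjv
        rw [gF, gF2, diffFF, case2 b]; linarith
end
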